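/- Let ε > 0 and let G be a simple graph on n vertices with m edges. If G is ε-far from being bipartite, then the number of triangles of G satisfies t(G) ≥ (n/6)·(m + ε − n²/4). -/

import Mathlib

open Classical in
/-- Adjacency matrix of a simple graph, over `ℝ`. -/
noncomputable def adjMat {V : Type*} [Fintype V] (G : SimpleGraph V) : Matrix V V ℝ :=
  Matrix.of fun i j => if G.Adj i j then 1 else 0

/-- Spectral radius (largest eigenvalue) of a finite simple graph: the supremum of the
real spectrum of its adjacency matrix. -/
noncomputable def specRad {V : Type*} [Fintype V] [DecidableEq V]
    (G : SimpleGraph V) : ℝ :=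
  sSup (spectrum ℝ (adjMat G))

/-- Number of edges of a graph. -/
noncomputable def edgeCount {V : Type*} (G : SimpleGraph V) : ℕ := G.edgeSet.ncard

/-- Number of triangles of a graph. -/
noncomputable def triangleCount {V : Type*} (G : SimpleGraph V) : ℕ :=
  {t : Finset V | G.IsNClique 3 t}.ncard

/-- Triangle covering number: minimum size of a vertex set meeting every triangle. -/
noncomputable def triangleCoverNumber {V : Type*} [Fintype V] [DecidableEq V]
    (G : SimpleGraph V) : ℕ :=
  sInf {k | ∃ s : Finset V, s.card = k ∧ ∀ t : Finset V, G.IsNClique 3 t → ∃ v ∈ s, v ∈ t}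

/-- Number of bowties: unordered pairs of triangles sharing exactly one vertex. -/
noncomputable def bowtieCount {V : Type*} [DecidableEq V] (G : SimpleGraph V) : ℕ :=
  {p : Finset (Finset V) | p.card = 2 ∧ (∀ t ∈ p, G.IsNClique 3 t) ∧
    ∀ t₁ ∈ p, ∀ t₂ ∈ p, t₁ ≠ t₂ → (t₁ ∩ t₂).card = 1}.ncard

/-- Complete bipartite graph on `Fin n` with parts `[0, s)` and `[s, n)`. -/
def biGraph (n s : ℕ) : SimpleGraph (Fin n) :=
  SimpleGraph.fromRel (fun i j => (i : ℕ) < s ∧ s ≤ (j : ℕ))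

/-- `K_{s,t}^{+2}`: complete bipartite with two disjoint extra edges `{0,1}`, `{2,3}`
inside the part `[0, s)`. -/
def biGraphPlus2 (n s : ℕ) : SimpleGraph (Fin n) :=
  SimpleGraph.fromRel (fun i j => ((i : ℕ) < s ∧ s ≤ (j : ℕ)) ∨
    ((i : ℕ) = 0 ∧ (j : ℕ) = 1) ∨ ((i : ℕ) = 2 ∧ (j : ℕ) = 3))

/-- `K_{s,t}^{+}`: complete bipartite with one extra edge `{0,1}` inside the part `[0, s)`. -/
def biGraphPlus1 (n s : ℕ) : SimpleGraph (Fin n) :=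
  SimpleGraph.fromRel (fun i j => ((i : ℕ) < s ∧ s ≤ (j : ℕ)) ∨ ((i : ℕ) = 0 ∧ (j : ℕ) = 1))

/-- `K_{s,t}^{++}`: complete bipartite with one extra edge in each part. -/
def biGraphPlusPlus (n s : ℕ) : SimpleGraph (Fin n) :=
  SimpleGraph.fromRel (fun i j => ((i : ℕ) < s ∧ s ≤ (j : ℕ)) ∨
    ((i : ℕ) = 0 ∧ (j : ℕ) = 1) ∨ ((i : ℕ) = s ∧ (j : ℕ) = s + 1))

/-- The friendship graph `F_k`: `k` triangles meeting in the common vertex `0`. -/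
def friendship (k : ℕ) : SimpleGraph (Fin (2 * k + 1)) :=
  SimpleGraph.fromRel (fun a b => ((a : ℕ) = 0 ∧ (b : ℕ) ≠ 0) ∨
    ((a : ℕ) % 2 = 1 ∧ (b : ℕ) = (a : ℕ) + 1))

/-- `G` contains a copy of `H` (a subgraph isomorphic to `H`). -/
def ContainsCopy {α β : Type*} (H : SimpleGraph α) (G : SimpleGraph β) : Prop :=
  ∃ f : α → β, Function.Injective f ∧ ∀ a b, H.Adj a b → G.Adj (f a) (f b)

/-- Number of edges of `G` with both endpoints in `S`. -/
noncomputable def eIn {V : Type*} (G : SimpleGraph V) (S : Finset V) : ℕ :=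
  {e ∈ G.edgeSet | ∀ v ∈ e, v ∈ S}.ncard

/-- Number of edges of `G` with one endpoint in `S` and the other in `T`. -/
noncomputable def eCross {V : Type*} (G : SimpleGraph V) (S T : Finset V) : ℕ :=
  {e ∈ G.edgeSet | ∃ u ∈ S, ∃ v ∈ T, e = s(u, v)}.ncard

/-- `G` is `ε`-far from being bipartite: every spanning subgraph obtained by removing
fewer than `ε` edges is non-bipartite. -/
def FarFromBipartite {V : Type*} (G : SimpleGraph V) (ε : ℝ) : Prop :=
  ∀ G' : SimpleGraph V, G' ≤ G → (edgeCount G : ℝ) - ε < (edgeCount G' : ℝ) →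
    ¬ G'.Colorable 2

open Finset

lemma mem_six_aux {α : Type*} [DecidableEq α] {x y z v a b : α}
    (h1 : v ≠ a) (h2 : v ≠ b) (h3 : a ≠ b)
    (hv : v = x ∨ v = y ∨ v = z) (ha : a = x ∨ a = y ∨ a = z) (hb : b = x ∨ b = y ∨ b = z) :
    (v, a, b) ∈ ({(x,y,z),(x,z,y),(y,x,z),(y,z,x),(z,x,y),(z,y,x)} : Finset (α × α × α)) := by
  rcases hv with rfl|rfl|rfl <;> rcases ha with rfl|rfl|rfl <;> rcases hb with rfl|rfl|rfl <;>
    simp_all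

lemma card_six_aux {α : Type*} [DecidableEq α] (a b c d e f : α) :
    #({a, b, c, d, e, f} : Finset α) ≤ 6 := by
  refine le_trans (Finset.card_insert_le _ _) (Nat.succ_le_succ ?_)
  refine le_trans (Finset.card_insert_le _ _) (Nat.succ_le_succ ?_)
  refine le_trans (Finset.card_insert_le _ _) (Nat.succ_le_succ ?_)
  refine le_trans (Finset.card_insert_le _ _) (Nat.succ_le_succ ?_)
  refine le_trans (Finset.card_insert_le _ _) (Nat.succ_le_succ ?_)
  simp

/-- If `G` is `ε`-far from being bipartite, then
`t(G) ≥ (n/6)·(m + ε − n²/4)`. -/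
theorem stmt_11 (n : ℕ) (ε : ℝ) (hε : 0 < ε) (G : SimpleGraph (Fin n))
    (hfar : FarFromBipartite G ε) :
    (n : ℝ) / 6 * ((edgeCount G : ℝ) + ε - (n : ℝ) ^ 2 / 4) ≤ (triangleCount G : ℝ) := by
  classical
  rcases Nat.eq_zero_or_pos n with hn0 | hnpos
  · subst hn0
    exact absurd
      (⟨SimpleGraph.Coloring.mk (fun v => v.elim0) (fun {a b} _ => a.elim0)⟩ : G.Colorable 2)
      (hfar G le_rfl (by linarith))
  have hedge : ∀ H : SimpleGraph (Fin n), edgeCount H = #H.edgeFinset := by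
    intro H
    rw [edgeCount, show H.edgeSet = ↑H.edgeFinset by simp]
    exact Set.ncard_coe_finset _
  have ht : triangleCount G = #(G.cliqueFinset 3) := by
    rw [triangleCount, show {t : Finset (Fin n) | G.IsNClique 3 t} = ↑(G.cliqueFinset 3) by
      ext t; simp [SimpleGraph.mem_cliqueFinset_iff]]
    exact Set.ncard_coe_finset _
  have hpair : ∀ H : SimpleGraph (Fin n), 2 * #H.edgeFinset
      = ∑ a : Fin n, ∑ b : Fin n, (if H.Adj a b then 1 else 0) := by
    intro H
    rw [SimpleGraph.two_mul_card_edgeFinset, Finset.card_filter, Fintype.sum_prod_type]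
  have hdeg : ∀ a : Fin n, G.degree a = ∑ b, if G.Adj a b then 1 else 0 := by
    intro a
    rw [← SimpleGraph.card_neighborFinset_eq_degree, SimpleGraph.neighborFinset_eq_filter,
      Finset.card_filter]
  set m : ℕ := #G.edgeFinset with hmdef
  set t3 : ℕ := #(G.cliqueFinset 3) with ht3def
  set W : Fin n → ℕ := fun v => ∑ a, ∑ b,
    (if G.Adj v a ∧ G.Adj v b ∧ G.Adj a b then 1 else 0) with hWdef
  set A : Fin n → ℕ := fun v => ∑ a, (if G.Adj v a then G.degree a else 0) with hAdef
  -- STEP 1: per-vertex inequality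
  have step1 : ∀ v : Fin n, (A v : ℝ) ≤ (m : ℝ) - ε + (W v : ℝ) := by
    intro v
    set Gv : SimpleGraph (Fin n) :=
      { Adj := fun a b => G.Adj a b ∧ ¬(G.Adj v a ↔ G.Adj v b)
        symm := ⟨by rintro a b ⟨h1, h2⟩; exact ⟨h1.symm, fun h => h2 h.symm⟩⟩
        loopless := ⟨by rintro a ⟨h1, -⟩; exact G.irrefl h1⟩ } with hGvdef
    have hGvAdj : ∀ a b, Gv.Adj a b ↔ (G.Adj a b ∧ ¬(G.Adj v a ↔ G.Adj v b)) :=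
      fun _ _ => Iff.rfl
    have hGvle : Gv ≤ G := fun a b h => h.1
    have hGvcol : Gv.Colorable 2 := by
      refine ⟨SimpleGraph.Coloring.mk (fun a => if G.Adj v a then (0 : Fin 2) else 1) ?_⟩
      intro a b hab
      obtain ⟨-, hne⟩ := (hGvAdj a b).1 hab
      by_cases h1 : G.Adj v a <;> by_cases h2 : G.Adj v b
      · exact absurd (iff_of_true h1 h2) hne
      · simp only [if_pos h1, if_neg h2]; decide
      · simp only [if_neg h1, if_pos h2]; decide
      · exact absurd (iff_of_false h1 h2) hne
    have hEv : (edgeCount Gv : ℝ) ≤ (m : ℝ) - ε :=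
      not_lt.1 fun h => hfar Gv hGvle (by rw [hedge G, ← hmdef]; exact h) hGvcol
    set X : ℕ := ∑ a, ∑ b, (if G.Adj a b ∧ G.Adj v a ∧ ¬ G.Adj v b then 1 else 0) with hXdef
    have hGvsum : 2 * edgeCount Gv = X + X := by
      rw [hedge Gv, hpair Gv, hXdef]
      trans (∑ a : Fin n, ∑ b : Fin n, ((if G.Adj a b ∧ G.Adj v a ∧ ¬ G.Adj v b then 1 else 0)
            + (if G.Adj a b ∧ ¬ G.Adj v a ∧ G.Adj v b then 1 else 0)))
      · refine Finset.sum_congr rfl fun a _ => Finset.sum_congr rfl fun b _ => ?_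
        by_cases h1 : G.Adj a b <;> by_cases h2 : G.Adj v a <;> by_cases h3 : G.Adj v b <;>
          simp [hGvAdj, h1, h2, h3]
      · simp only [Finset.sum_add_distrib]
        congr 1
        rw [Finset.sum_comm]
        refine Finset.sum_congr rfl fun a _ => Finset.sum_congr rfl fun b _ => ?_
        refine if_congr ?_ rfl rfl
        constructor
        · rintro ⟨h1, h2, h3⟩; exact ⟨h1.symm, h3, h2⟩
        · rintro ⟨h1, h2, h3⟩; exact ⟨h1.symm, h3, h2⟩
    have hAsplit : A v = W v + X := by
      rw [hAdef, hWdef, hXdef]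
      simp only
      rw [← Finset.sum_add_distrib]
      refine Finset.sum_congr rfl fun a _ => ?_
      rw [← Finset.sum_add_distrib]
      by_cases h2 : G.Adj v a
      · rw [if_pos h2, hdeg a]
        refine Finset.sum_congr rfl fun b _ => ?_
        by_cases h1 : G.Adj a b <;> by_cases h3 : G.Adj v b <;> simp [h1, h2, h3]
      · rw [if_neg h2]
        symm
        refine Finset.sum_eq_zero fun b _ => ?_
        simp [h2]
    have hAeq : A v = W v + edgeCount Gv := by omega
    rw [hAeq]
    push_cast
    linarith
  -- STEP 2: sum of A = sum of squared degrees
  have hAsum : ∑ v, A v = ∑ a, G.degree a * G.degree a := by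
    rw [hAdef]
    simp only
    rw [Finset.sum_comm]
    refine Finset.sum_congr rfl fun a _ => ?_
    rw [← Finset.sum_filter, Finset.sum_const, smul_eq_mul]
    congr 1
    rw [show (univ.filter fun v => G.Adj v a) = G.neighborFinset a by
      ext v; simp [SimpleGraph.mem_neighborFinset, G.adj_comm]]
    exact SimpleGraph.card_neighborFinset_eq_degree G a
  -- STEP 3: triangle bound ∑ W ≤ 6 * t3
  have hW6 : ∑ v, W v ≤ 6 * t3 := by
    have hT3 : ∑ v, W v = #((univ : Finset (Fin n × Fin n × Fin n)).filter
        fun p => G.Adj p.1 p.2.1 ∧ G.Adj p.1 p.2.2 ∧ G.Adj p.2.1 p.2.2) := by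
      rw [Finset.card_filter, hWdef]
      simp only [Fintype.sum_prod_type]
    rw [hT3]
    have hmem : ∀ p ∈ ((univ : Finset (Fin n × Fin n × Fin n)).filter
        fun p => G.Adj p.1 p.2.1 ∧ G.Adj p.1 p.2.2 ∧ G.Adj p.2.1 p.2.2),
        ({p.1, p.2.1, p.2.2} : Finset (Fin n)) ∈ G.cliqueFinset 3 := by
      intro p hp
      rw [SimpleGraph.mem_cliqueFinset_iff, SimpleGraph.is3Clique_triple_iff]
      exact (Finset.mem_filter.1 hp).2
    rw [Finset.card_eq_sum_card_fiberwise hmem]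
    refine le_trans (Finset.sum_le_card_nsmul _ _ 6 ?_) ?_
    · intro t htmem
      have hcard3 : t.card = 3 := (SimpleGraph.mem_cliqueFinset_iff.1 htmem).2
      obtain ⟨x, y, z, hxy, hxz, hyz, rfl⟩ := Finset.card_eq_three.1 hcard3
      refine le_trans (Finset.card_le_card (t := ({(x,y,z),(x,z,y),(y,x,z),(y,z,x),(z,x,y),(z,y,x)}
        : Finset (Fin n × Fin n × Fin n))) ?_) (card_six_aux _ _ _ _ _ _)
      intro p hp
      simp only [Finset.mem_filter, Finset.mem_univ, true_and] at hp
      obtain ⟨⟨hva, hvb, hab⟩, hset⟩ := hp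
      obtain ⟨v, a, b⟩ := p
      simp only at hva hvb hab hset
      refine mem_six_aux hva.ne hvb.ne hab.ne ?_ ?_ ?_
      · have : v ∈ ({x, y, z} : Finset (Fin n)) := by rw [← hset]; simp
        simpa using this
      · have : a ∈ ({x, y, z} : Finset (Fin n)) := by rw [← hset]; simp
        simpa using this
      · have : b ∈ ({x, y, z} : Finset (Fin n)) := by rw [← hset]; simp
        simpa using this
    · rw [smul_eq_mul, mul_comm, ht3def]
  -- STEP 4: assemble
  have hhand : ∑ a, G.degree a = 2 * m := by
    rw [hmdef]; exact SimpleGraph.sum_degrees_eq_twice_card_edges G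
  have hCS : (∑ a, (G.degree a : ℝ)) ^ 2 ≤ (n : ℝ) * ∑ a, (G.degree a : ℝ) ^ 2 := by
    have := sq_sum_le_card_mul_sum_sq (s := (univ : Finset (Fin n)))
      (f := fun a => (G.degree a : ℝ))
    simpa using this
  have hsum1 : (∑ a, (G.degree a : ℝ) ^ 2) ≤ (n : ℝ) * ((m : ℝ) - ε) + 6 * (t3 : ℝ) := by
    have e2 : (∑ a, (G.degree a : ℝ) ^ 2) = ∑ v, (A v : ℝ) := by
      rw [show ∑ v, (A v : ℝ) = ((∑ v, A v : ℕ) : ℝ) by push_cast; ring, hAsum]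
      push_cast
      refine Finset.sum_congr rfl fun a _ => ?_
      ring
    rw [e2]
    calc ∑ v, (A v : ℝ) ≤ ∑ v : Fin n, ((m : ℝ) - ε + (W v : ℝ)) :=
          Finset.sum_le_sum fun v _ => step1 v
      _ = (n : ℝ) * ((m : ℝ) - ε) + ∑ v, (W v : ℝ) := by
          rw [Finset.sum_add_distrib, Finset.sum_const, card_univ, Fintype.card_fin,
            nsmul_eq_mul]
      _ ≤ (n : ℝ) * ((m : ℝ) - ε) + 6 * (t3 : ℝ) := by
          have h6 : (∑ v, (W v : ℝ)) ≤ 6 * (t3 : ℝ) := by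
            rw [show ∑ v, (W v : ℝ) = ((∑ v, W v : ℕ) : ℝ) by push_cast; ring]
            exact_mod_cast hW6
          linarith
  have hfinal : 4 * (m : ℝ) ^ 2 ≤ (n : ℝ) * ((n : ℝ) * ((m : ℝ) - ε) + 6 * (t3 : ℝ)) := by
    have h2m : (∑ a, (G.degree a : ℝ)) = 2 * (m : ℝ) := by
      rw [show ∑ a, (G.degree a : ℝ) = ((∑ a, G.degree a : ℕ) : ℝ) by push_cast; ring, hhand]
      push_cast; ring
    have hCS' := hCS
    rw [h2m] at hCS'
    have hmul := mul_le_mul_of_nonneg_left hsum1 (by positivity : (0:ℝ) ≤ (n : ℝ))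
    nlinarith
  rw [hedge G, ← hmdef, ht]
  have hnR : (0 : ℝ) < (n : ℝ) := by exact_mod_cast hnpos
  nlinarith [hfinal, sq_nonneg (2 * (m : ℝ) - (n : ℝ) ^ 2 / 2), hnR, hε]
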